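/- Let A be a commutative associative F-algebra with identity that is an integral domain, let D be a commutative F-subspace of Der A (i.e., d₁∘d₂ = d₂∘d₁ for all d₁,d₂ ∈ D), and let W = A·D = span{u·d : u ∈ A, d ∈ D}, a Lie subalgebra of Der A. For a nonzero d ∈ D, the adjoint operator ad_d : u ↦ [d,u] is locally nilpotent on W if and only if d is locally nilpotent on A. -/

import Mathlib

/- STATEMENT 18: for A a commutative domain, D a commutative subspace of Der A, W = A·D, and
0 ≠ d ∈ D: ad_d is locally nilpotent on W iff d is locally nilpotent on A. -/

attribute [local instance] LieRing.ofAssociativeRing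

theorem ad_locallyNilpotent_iff (F : Type*) [Field F] [CharZero F]
    (A : Type*) [CommRing A] [IsDomain A] [Algebra F A]
    (D : Submodule F (Module.End F A))
    (hder : ∀ d ∈ D, ∀ u v : A, d (u * v) = d u * v + u * d v)
    (hcomm : ∀ d ∈ D, ∀ e ∈ D, d * e = e * d)
    (W : Submodule F (Module.End F A))
    (hW : W = Submodule.span F
      {w : Module.End F A | ∃ (u : A) (e : Module.End F A), e ∈ D ∧
        w = (LinearMap.mulLeft F u).comp e})
    (d : Module.End F A) (hd : d ∈ D) (hd0 : d ≠ 0) :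
    (∀ x ∈ W, ∃ m : ℕ, 0 < m ∧
        ((LieAlgebra.ad F (Module.End F A) d) ^ m) x = 0) ↔
      (∀ a : A, ∃ m : ℕ, 0 < m ∧ (d ^ m) a = 0) := by
  -- single-step computation: ad d (u·e) = (d u)·e
  have step : ∀ (u : A) (e : Module.End F A), e ∈ D →
      (LieAlgebra.ad F (Module.End F A) d) ((LinearMap.mulLeft F u).comp e)
        = (LinearMap.mulLeft F (d u)).comp e := by
    intro u e he
    ext v
    have hde : d (e v) = e (d v) := by
      have := hcomm d hd e he
      exact congrFun (congrArg (fun f : Module.End F A => (f : A → A)) this) v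
    simp only [LieAlgebra.ad_apply, Ring.lie_def, LinearMap.sub_apply, Module.End.mul_apply,
      LinearMap.comp_apply, LinearMap.mulLeft_apply]
    rw [hder d hd u (e v), hde]
    ring
  have key : ∀ (u : A) (e : Module.End F A), e ∈ D → ∀ m : ℕ,
      ((LieAlgebra.ad F (Module.End F A) d) ^ m) ((LinearMap.mulLeft F u).comp e)
        = (LinearMap.mulLeft F ((d ^ m) u)).comp e := by
    intro u e he m
    induction m generalizing u with
    | zero => simp
    | succ n ih =>
        rw [pow_succ, Module.End.mul_apply, step u e he, ih (d u), pow_succ,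
          Module.End.mul_apply]
  constructor
  · intro h a
    have hmem : (LinearMap.mulLeft F a).comp d ∈ W := by
      rw [hW]; exact Submodule.subset_span ⟨a, d, hd, rfl⟩
    obtain ⟨m, hm, hx⟩ := h _ hmem
    refine ⟨m, hm, ?_⟩
    rw [key a d hd m] at hx
    obtain ⟨v, hv⟩ : ∃ v, d v ≠ 0 := by
      by_contra hcon
      push_neg at hcon
      exact hd0 (LinearMap.ext hcon)
    have := congrFun (congrArg (fun f : Module.End F A => (f : A → A)) hx) v
    simp only [LinearMap.comp_apply, LinearMap.mulLeft_apply, LinearMap.zero_apply] at this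
    exact (mul_eq_zero.mp this).resolve_right hv
  · intro h x hx
    rw [hW] at hx
    induction hx using Submodule.span_induction with
    | mem w hw =>
        obtain ⟨u, e, he, rfl⟩ := hw
        obtain ⟨m, hm, hu⟩ := h u
        exact ⟨m, hm, by rw [key u e he m, hu]; ext v; simp⟩
    | zero => exact ⟨1, one_pos, by simp⟩
    | add y z _ _ hy hz =>
        obtain ⟨m, hm, hym⟩ := hy
        obtain ⟨n, hn, hzn⟩ := hz
        refine ⟨m + n, by omega, ?_⟩
        rw [map_add]
        have h1 : ((LieAlgebra.ad F (Module.End F A) d) ^ (m + n)) y = 0 := by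
          rw [add_comm, pow_add, Module.End.mul_apply, hym, map_zero]
        have h2 : ((LieAlgebra.ad F (Module.End F A) d) ^ (m + n)) z = 0 := by
          rw [pow_add, Module.End.mul_apply, hzn, map_zero]
        rw [h1, h2, add_zero]
    | smul c y _ hy =>
        obtain ⟨m, hm, hym⟩ := hy
        exact ⟨m, hm, by rw [map_smul, hym, smul_zero]⟩
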